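/- Let n ≥ 1 and consider the braid group B_{n+1} (presented by the Artin relations on σ_1, …, σ_n) with the elements x_{1j} for 2 ≤ j ≤ n+1. Then: (i) the group homomorphism from the free group on n generators, FreeGroup (Fin n) → B_{n+1}, sending the i-th generator X_i to x_{1,i+2} (i.e. to x_{12}, x_{13}, …, x_{1,n+1}) is injective; and (ii) its range, the subgroup of B_{n+1} generated by {x_{12}, …, x_{1,n+1}}, is a normal subgroup of the pure braid group PB_{n+1} = ker(B_{n+1} → S_{n+1}). -/

import Mathlib

/-!
The braid group `B_m` on `m = N + 2 ≥ 2` strands, presented by the Artin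
relations on the generators `σ_1, …, σ_{m-1}` (indexed by `Fin (N+1)`, the
generator `σ_l`, `1 ≤ l ≤ m - 1`, corresponding to the index `l - 1`).
-/

/-- The Artin relations: `σ_i σ_{i+1} σ_i (σ_{i+1} σ_i σ_{i+1})⁻¹` for adjacent
indices and `σ_i σ_j (σ_j σ_i)⁻¹` for `|i - j| > 1`. -/
def braidRels (N : ℕ) : Set (FreeGroup (Fin (N + 1))) :=
  { r |
    (∃ i j : Fin (N + 1), (i : ℕ) + 1 = (j : ℕ) ∧
      r = FreeGroup.of i * FreeGroup.of j * FreeGroup.of i *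
        (FreeGroup.of j * FreeGroup.of i * FreeGroup.of j)⁻¹) ∨
    (∃ i j : Fin (N + 1), (i : ℕ) + 1 < (j : ℕ) ∧
      r = FreeGroup.of i * FreeGroup.of j *
        (FreeGroup.of j * FreeGroup.of i)⁻¹) }

/-- The braid group on `N + 2` strands. -/
abbrev Braid (N : ℕ) := PresentedGroup (braidRels N)

/-- The Artin generator `σ_l` of `B_{N+2}`, for `1 ≤ l ≤ N + 1` (junk value `1`
otherwise). -/
def sig (N : ℕ) (l : ℕ) : Braid N :=
  if h : 1 ≤ l ∧ l ≤ N + 1 then PresentedGroup.of ⟨l - 1, by omega⟩ else 1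

/-- The word `σ_{j-2} σ_{j-3} ⋯ σ_i`. -/
def chain (N : ℕ) (i j : ℕ) : Braid N :=
  ((List.range (j - 1 - i)).map fun t => sig N (j - 2 - t)).prod

/-- The pure braid generator `x_{ij} = (σ_{j-2} ⋯ σ_i)⁻¹ σ_{j-1}² (σ_{j-2} ⋯ σ_i)`
for `1 ≤ i < j ≤ N + 2`. -/
def xgen (N : ℕ) (i j : ℕ) : Braid N :=
  (chain N i j)⁻¹ * (sig N (j - 1)) ^ 2 * chain N i j


namespace BraidProof

variable {N : ℕ}

lemma mk_rel_one {r : FreeGroup (Fin (N+1))} (hr : r ∈ braidRels N) :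
    (PresentedGroup.mk (braidRels N) r : Braid N) = 1 := by
  have := Subgroup.subset_normalClosure (s := braidRels N) hr
  exact (QuotientGroup.eq_one_iff r).mpr this

lemma of_braid_rel (i j : Fin (N+1)) (hij : (i:ℕ) + 1 = (j:ℕ)) :
    (PresentedGroup.of i : Braid N) * PresentedGroup.of j * PresentedGroup.of i =
      PresentedGroup.of j * PresentedGroup.of i * PresentedGroup.of j := by
  have h := mk_rel_one (N := N) (Or.inl ⟨i, j, hij, rfl⟩)
  have h2 : (PresentedGroup.of i : Braid N) * PresentedGroup.of j * PresentedGroup.of i *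
      (PresentedGroup.of j * PresentedGroup.of i * PresentedGroup.of j)⁻¹ = 1 := by
    simpa [map_mul, map_inv, PresentedGroup.of] using h
  exact mul_inv_eq_one.mp h2

lemma of_comm_rel (i j : Fin (N+1)) (hij : (i:ℕ) + 1 < (j:ℕ)) :
    (PresentedGroup.of i : Braid N) * PresentedGroup.of j =
      PresentedGroup.of j * PresentedGroup.of i := by
  have h := mk_rel_one (N := N) (Or.inr ⟨i, j, hij, rfl⟩)
  have h2 : (PresentedGroup.of i : Braid N) * PresentedGroup.of j *
      (PresentedGroup.of j * PresentedGroup.of i)⁻¹ = 1 := by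
    simpa [map_mul, map_inv, PresentedGroup.of] using h
  exact mul_inv_eq_one.mp h2

lemma sig_eq_of (l : ℕ) (h1 : 1 ≤ l) (h2 : l ≤ N + 1) :
    sig N l = PresentedGroup.of ⟨l - 1, by omega⟩ := by
  rw [sig, dif_pos ⟨h1, h2⟩]

lemma braid_rel (l : ℕ) (h1 : 1 ≤ l) (h2 : l + 1 ≤ N + 1) :
    sig N l * sig N (l+1) * sig N l = sig N (l+1) * sig N l * sig N (l+1) := by
  rw [sig_eq_of l h1 (by omega), sig_eq_of (l+1) (by omega) h2]
  exact of_braid_rel ⟨l-1, by omega⟩ ⟨l+1-1, by omega⟩ (by simp; omega)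

lemma comm_rel (l l' : ℕ) (h1 : 1 ≤ l) (h : l + 1 < l') (h2 : l' ≤ N + 1) :
    sig N l * sig N l' = sig N l' * sig N l := by
  rw [sig_eq_of l h1 (by omega), sig_eq_of l' (by omega) h2]
  exact of_comm_rel ⟨l-1, by omega⟩ ⟨l'-1, by omega⟩ (by simp; omega)

/-- `cw k = σ_k σ_{k-1} ⋯ σ_1`. -/
def cw (N : ℕ) (k : ℕ) : Braid N := chain N 1 (k+2)

lemma cw_zero : cw N 0 = 1 := by
  simp [cw, chain]

lemma cw_succ (k : ℕ) : cw N (k+1) = sig N (k+1) * cw N k := by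
  show chain N 1 (k+3) = sig N (k+1) * chain N 1 (k+2)
  unfold chain
  have h1 : k + 3 - 1 - 1 = k + 1 := by omega
  have h2 : k + 2 - 1 - 1 = k := by omega
  rw [h1, h2, List.range_succ_eq_map]
  simp [List.map_map, Function.comp_def, Nat.succ_sub_succ]

lemma xgen_cw (j : ℕ) (h : 2 ≤ j) :
    xgen N 1 j = (cw N (j-2))⁻¹ * (sig N (j-1))^2 * cw N (j-2) := by
  have : j - 2 + 2 = j := by omega
  rw [xgen, cw, this]

/- 2-generator consequences of the braid relation -/
section TwoGen
variable {G : Type*} [Group G] {x y : G} (h : x*y*x = y*x*y)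

include h

lemma T_yxy : y*x*y⁻¹ = x⁻¹*y*x := by
  calc y*x*y⁻¹ = x⁻¹ * (x*y*x) * y⁻¹ := by group
    _ = x⁻¹ * (y*x*y) * y⁻¹ := by rw [h]
    _ = x⁻¹*y*x := by group

lemma T_xyx : x*y*x⁻¹ = y⁻¹*x*y := by
  calc x*y*x⁻¹ = y⁻¹ * (y*x*y) * x⁻¹ := by group
    _ = y⁻¹ * (x*y*x) * x⁻¹ := by rw [h]
    _ = y⁻¹*x*y := by group

lemma T_inv_conj : x⁻¹*y*x = y*x*y⁻¹ := (T_yxy h).symm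

lemma T1 : y*(x*x)*y⁻¹ = x⁻¹*(y*y)*x := by
  have e1 : y*(x*x)*y⁻¹ = (y*x*y⁻¹) * (y*x*y⁻¹) := by group
  rw [e1, T_yxy h]
  group

lemma T2 : y*(x⁻¹*(y*y)*x)*y⁻¹ = (x⁻¹*(y*y)*x)⁻¹ * (x*x) * (x⁻¹*(y*y)*x) := by
  have e1 : y*(x⁻¹*(y*y)*x)*y⁻¹ = (y*x*y⁻¹)⁻¹ * (y*y) * (y*x*y⁻¹) := by group
  rw [e1, T_yxy h]
  have e2 : y⁻¹*(x*x)*y = (y⁻¹*x*y) * (y⁻¹*x*y) := by group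
  have e3 : y⁻¹*x*y = x*y*x⁻¹ := (T_xyx h).symm
  have e4 : (x⁻¹*(y*y)*x)⁻¹ * (x*x) * (x⁻¹*(y*y)*x)
      = x⁻¹*y⁻¹*(y⁻¹*(x*x)*y)*y*x := by group
  rw [e4, e2, e3]
  group

end TwoGen

lemma sig_cw_comm (l k : ℕ) (h : k + 2 ≤ l) (hl : l ≤ N + 1) :
    sig N l * cw N k = cw N k * sig N l := by
  induction k with
  | zero => rw [cw_zero]; group
  | succ k ih =>
    rw [cw_succ]
    have hc := comm_rel (k+1) l (by omega) (by omega) hl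
    calc sig N l * (sig N (k+1) * cw N k) = (sig N l * sig N (k+1)) * cw N k := by group
      _ = (sig N (k+1) * sig N l) * cw N k := by rw [hc]
      _ = sig N (k+1) * (sig N l * cw N k) := by group
      _ = sig N (k+1) * (cw N k * sig N l) := by rw [ih (by omega)]
      _ = sig N (k+1) * cw N k * sig N l := by group

lemma cw_eq_sig_mul (l : ℕ) (h1 : 1 ≤ l) : cw N l = sig N l * cw N (l-1) := by
  cases l with
  | zero => omega
  | succ m => simpa using cw_succ m

lemma sig_cw_pass (l m : ℕ) (h1 : 1 ≤ l) (h2 : l + 1 ≤ m) (h3 : m ≤ N + 1) :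
    sig N l * cw N m = cw N m * sig N (l+1) := by
  induction m, h2 using Nat.le_induction with
  | base =>
    rw [cw_succ, cw_eq_sig_mul l h1]
    have hb := braid_rel (N:=N) l h1 (by omega)
    have hcomm := sig_cw_comm (N:=N) (l+1) (l-1) (by omega) (by omega)
    calc sig N l * (sig N (l+1) * (sig N l * cw N (l-1)))
        = (sig N l * sig N (l+1) * sig N l) * cw N (l-1) := by group
      _ = (sig N (l+1) * sig N l * sig N (l+1)) * cw N (l-1) := by rw [hb]
      _ = sig N (l+1) * sig N l * (sig N (l+1) * cw N (l-1)) := by group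
      _ = sig N (l+1) * sig N l * (cw N (l-1) * sig N (l+1)) := by rw [hcomm]
      _ = sig N (l+1) * (sig N l * cw N (l-1)) * sig N (l+1) := by group
  | succ m hm ih =>
    rw [cw_succ]
    have hc := comm_rel (N:=N) l (m+1) h1 (by omega) (by omega)
    calc sig N l * (sig N (m+1) * cw N m) = (sig N l * sig N (m+1)) * cw N m := by group
      _ = (sig N (m+1) * sig N l) * cw N m := by rw [hc]
      _ = sig N (m+1) * (sig N l * cw N m) := by group
      _ = sig N (m+1) * (cw N m * sig N (l+1)) := by rw [ih (by omega)]
      _ = sig N (m+1) * cw N m * sig N (l+1) := by group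

lemma cw_sig_conj (k : ℕ) (h2 : 2 ≤ k) (hk : k ≤ N + 1) :
    cw N (k-1) * sig N k = (sig N k)⁻¹ * sig N (k-1) * sig N k * cw N (k-1) := by
  have e1 : cw N (k-1) = sig N (k-1) * cw N (k-2) := by
    have : k - 2 = (k-1) - 1 := by omega
    rw [this, cw_eq_sig_mul (k-1) (by omega)]
  have hcomm := sig_cw_comm k (k-2) (by omega) hk
  have hb : sig N (k-1) * sig N k * sig N (k-1) = sig N k * sig N (k-1) * sig N k := by
    have := braid_rel (N:=N) (k-1) (by omega) (by omega)
    have hkk : k - 1 + 1 = k := by omega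
    rwa [hkk] at this
  have ht := T_xyx hb
  calc cw N (k-1) * sig N k = sig N (k-1) * cw N (k-2) * sig N k := by rw [e1]
    _ = sig N (k-1) * (sig N k * cw N (k-2)) := by rw [mul_assoc, ← hcomm]
    _ = (sig N (k-1) * sig N k * (sig N (k-1))⁻¹) * (sig N (k-1) * cw N (k-2)) := by group
    _ = ((sig N k)⁻¹ * sig N (k-1) * sig N k) * (sig N (k-1) * cw N (k-2)) := by rw [ht]
    _ = (sig N k)⁻¹ * sig N (k-1) * sig N k * cw N (k-1) := by rw [e1]

lemma cw_sig_conj2 (k : ℕ) (h2 : 2 ≤ k) (hk : k ≤ N + 1) :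
    cw N k * sig N k = sig N (k-1) * cw N k := by
  have e1 : cw N k = sig N k * cw N (k-1) := cw_eq_sig_mul k (by omega)
  calc cw N k * sig N k = sig N k * (cw N (k-1) * sig N k) := by rw [e1]; group
    _ = sig N k * ((sig N k)⁻¹ * sig N (k-1) * sig N k * cw N (k-1)) := by
        rw [cw_sig_conj k h2 hk]
    _ = sig N (k-1) * (sig N k * cw N (k-1)) := by group
    _ = sig N (k-1) * cw N k := by rw [← e1]

/-- The half twist `(σ_{j-2}⋯σ_1)⁻¹ σ_{j-1} (σ_{j-2}⋯σ_1)`. -/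
def HT (N : ℕ) (j : ℕ) : Braid N := (cw N (j-2))⁻¹ * sig N (j-1) * cw N (j-2)

lemma xgen_HT (j : ℕ) (h : 2 ≤ j) : xgen N 1 j = HT N j * HT N j := by
  rw [xgen_cw j h, HT, sq]; group

lemma HT_succ (j : ℕ) (h : 2 ≤ j) (hj : j ≤ N + 1) :
    HT N (j+1) = sig N j * HT N j * (sig N j)⁻¹ := by
  have hb : sig N (j-1) * sig N j * sig N (j-1) = sig N j * sig N (j-1) * sig N j := by
    have := braid_rel (N:=N) (j-1) (by omega) (by omega)
    have hjj : j - 1 + 1 = j := by omega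
    rwa [hjj] at this
  have ht := T_inv_conj hb
  have e1 : cw N (j+1-2) = sig N (j-1) * cw N (j-2) := by
    have h1 : j + 1 - 2 = j - 1 := by omega
    have h2 : j - 2 = (j-1) - 1 := by omega
    rw [h1, h2, cw_eq_sig_mul (j-1) (by omega)]
  have hC : Commute (sig N j) (cw N (j-2)) := sig_cw_comm (N:=N) j (j-2) (by omega) hj
  have h3 : j + 1 - 1 = j := by omega
  calc HT N (j+1) = (sig N (j-1) * cw N (j-2))⁻¹ * sig N j * (sig N (j-1) * cw N (j-2)) := by
        rw [HT, e1, h3]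
    _ = (cw N (j-2))⁻¹ * ((sig N (j-1))⁻¹ * sig N j * sig N (j-1)) * cw N (j-2) := by group
    _ = (cw N (j-2))⁻¹ * (sig N j * sig N (j-1) * (sig N j)⁻¹) * cw N (j-2) := by rw [ht]
    _ = ((cw N (j-2))⁻¹ * sig N j) * sig N (j-1) * ((sig N j)⁻¹ * cw N (j-2)) := by group
    _ = (sig N j * (cw N (j-2))⁻¹) * sig N (j-1) * (cw N (j-2) * (sig N j)⁻¹) := by
        rw [hC.inv_right.eq, hC.inv_left.eq]
    _ = sig N j * HT N j * (sig N j)⁻¹ := by rw [HT]; group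

lemma sig_HT_comm (k j : ℕ) (hk2 : 2 ≤ k) (hkN : k ≤ N + 1) (hj : 2 ≤ j)
    (hjN : j ≤ N + 2) (hne : j ≠ k) (hne2 : j ≠ k + 1) :
    sig N k * HT N j = HT N j * sig N k := by
  rcases lt_or_gt_of_ne hne with hlt | hgt
  · -- j < k : everything in HT N j is far below σ_k
    have hcomm := sig_cw_comm (N:=N) k (j-2) (by omega) hkN
    have hs : sig N k * sig N (j-1) = sig N (j-1) * sig N k := by
      rcases Nat.eq_or_lt_of_le hj with h2 | h2
      · -- j = 2 : σ_1
        exact (comm_rel (N:=N) (j-1) k (by omega) (by omega) hkN).symm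
      · exact (comm_rel (N:=N) (j-1) k (by omega) (by omega) hkN).symm
    calc sig N k * ((cw N (j-2))⁻¹ * sig N (j-1) * cw N (j-2))
        = ((cw N (j-2))⁻¹ * (cw N (j-2) * sig N k * (cw N (j-2))⁻¹)) * sig N (j-1) * cw N (j-2) := by
          group
      _ = ((cw N (j-2))⁻¹ * sig N k) * sig N (j-1) * cw N (j-2) := by
          rw [← hcomm]; group
      _ = (cw N (j-2))⁻¹ * (sig N (j-1) * sig N k) * cw N (j-2) := by rw [← hs]; group
      _ = ((cw N (j-2))⁻¹ * sig N (j-1)) * (sig N k * cw N (j-2)) := by group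
      _ = ((cw N (j-2))⁻¹ * sig N (j-1)) * (cw N (j-2) * sig N k) := by rw [hcomm]
      _ = HT N j * sig N k := by rw [HT]; group
  · -- j > k, and j ≠ k+1 so j ≥ k+2 : induction
    have hge : k + 2 ≤ j := by omega
    clear hne hne2 hj hgt
    induction j, hge using Nat.le_induction with
    | base =>
      -- j = k+2 : HT = (cw k)⁻¹ σ_{k+1} (cw k)
      have h2 : k + 2 - 2 = k := by omega
      have h1 : k + 2 - 1 = k + 1 := by omega
      have hcj : cw N k * sig N k = sig N (k-1) * cw N k := cw_sig_conj2 k hk2 hkN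
      -- σ_k (cw k)⁻¹ = (cw k)⁻¹ σ_{k-1}
      have hcj' : sig N k * (cw N k)⁻¹ = (cw N k)⁻¹ * sig N (k-1) := by
        calc sig N k * (cw N k)⁻¹ = (cw N k)⁻¹ * (cw N k * sig N k) * (cw N k)⁻¹ := by group
          _ = (cw N k)⁻¹ * (sig N (k-1) * cw N k) * (cw N k)⁻¹ := by rw [hcj]
          _ = (cw N k)⁻¹ * sig N (k-1) := by group
      have hfar : sig N (k-1) * sig N (k+1) = sig N (k+1) * sig N (k-1) :=
        comm_rel (N:=N) (k-1) (k+1) (by omega) (by omega) (by omega)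
      have hcj'' : sig N (k-1) * cw N k = cw N k * sig N k := hcj.symm
      calc sig N k * HT N (k+2) = sig N k * ((cw N k)⁻¹ * sig N (k+1) * cw N k) := by
            rw [HT, h2, h1]
        _ = (sig N k * (cw N k)⁻¹) * sig N (k+1) * cw N k := by group
        _ = ((cw N k)⁻¹ * sig N (k-1)) * sig N (k+1) * cw N k := by rw [hcj']
        _ = (cw N k)⁻¹ * (sig N (k-1) * sig N (k+1)) * cw N k := by group
        _ = (cw N k)⁻¹ * (sig N (k+1) * sig N (k-1)) * cw N k := by rw [hfar]
        _ = ((cw N k)⁻¹ * sig N (k+1)) * (sig N (k-1) * cw N k) := by group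
        _ = ((cw N k)⁻¹ * sig N (k+1)) * (cw N k * sig N k) := by rw [hcj'']
        _ = HT N (k+2) * sig N k := by rw [HT, h2, h1]; group
    | succ j hj ih =>
      have hjN' : j ≤ N + 1 := by omega
      have hstep := HT_succ (N:=N) j (by omega) hjN'
      have hfar : sig N k * sig N j = sig N j * sig N k :=
        comm_rel (N:=N) k j (by omega) (by omega) hjN'
      have ihe := ih (by omega)
      calc sig N k * HT N (j+1) = sig N k * (sig N j * HT N j * (sig N j)⁻¹) := by rw [hstep]
        _ = (sig N k * sig N j) * HT N j * (sig N j)⁻¹ := by group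
        _ = (sig N j * sig N k) * HT N j * (sig N j)⁻¹ := by rw [hfar]
        _ = sig N j * (sig N k * HT N j) * (sig N j)⁻¹ := by group
        _ = sig N j * (HT N j * sig N k) * (sig N j)⁻¹ := by rw [ihe]
        _ = (sig N j * HT N j * (sig N j)⁻¹) * ((sig N j) * sig N k * (sig N j)⁻¹) := by group
        _ = HT N (j+1) * ((sig N j) * sig N k * (sig N j)⁻¹) := by rw [hstep]
        _ = HT N (j+1) * ((sig N k * sig N j) * (sig N j)⁻¹) := by rw [← hfar]
        _ = HT N (j+1) * sig N k := by group

/-- (I): `σ_k` commutes with `x_{1j}` for `j ∉ {k, k+1}`. -/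
lemma conj_I (k j : ℕ) (hk2 : 2 ≤ k) (hkN : k ≤ N + 1) (hj : 2 ≤ j)
    (hjN : j ≤ N + 2) (hne : j ≠ k) (hne2 : j ≠ k + 1) :
    sig N k * xgen N 1 j * (sig N k)⁻¹ = xgen N 1 j := by
  have hc := sig_HT_comm (N:=N) k j hk2 hkN hj hjN hne hne2
  rw [xgen_HT j hj]
  calc sig N k * (HT N j * HT N j) * (sig N k)⁻¹
      = (sig N k * HT N j) * HT N j * (sig N k)⁻¹ := by group
    _ = (HT N j * sig N k) * HT N j * (sig N k)⁻¹ := by rw [hc]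
    _ = HT N j * (sig N k * HT N j) * (sig N k)⁻¹ := by group
    _ = HT N j * (HT N j * sig N k) * (sig N k)⁻¹ := by rw [hc]
    _ = HT N j * HT N j := by group

/-- (II): `σ_k x_{1k} σ_k⁻¹ = x_{1,k+1}`. -/
lemma conj_II (k : ℕ) (hk2 : 2 ≤ k) (hkN : k ≤ N + 1) :
    sig N k * xgen N 1 k * (sig N k)⁻¹ = xgen N 1 (k+1) := by
  have hb : sig N (k-1) * sig N k * sig N (k-1) = sig N k * sig N (k-1) * sig N k := by
    have := braid_rel (N:=N) (k-1) (by omega) (by omega)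
    have hkk : k - 1 + 1 = k := by omega
    rwa [hkk] at this
  have ht := T1 hb
  have hC : Commute (sig N k) (cw N (k-2)) := sig_cw_comm (N:=N) k (k-2) (by omega) hkN
  have e1 : cw N (k+1-2) = sig N (k-1) * cw N (k-2) := by
    have h1 : k + 1 - 2 = k - 1 := by omega
    have h2 : k - 2 = (k-1) - 1 := by omega
    rw [h1, h2, cw_eq_sig_mul (k-1) (by omega)]
  have h3 : k + 1 - 1 = k := by omega
  rw [xgen_cw k hk2, xgen_cw (k+1) (by omega), e1, h3, sq, sq]
  calc sig N k * ((cw N (k-2))⁻¹ * (sig N (k-1) * sig N (k-1)) * cw N (k-2)) * (sig N k)⁻¹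
      = (sig N k * (cw N (k-2))⁻¹) * (sig N (k-1) * sig N (k-1)) * (cw N (k-2) * (sig N k)⁻¹) := by
        group
    _ = ((cw N (k-2))⁻¹ * sig N k) * (sig N (k-1) * sig N (k-1)) * ((sig N k)⁻¹ * cw N (k-2)) := by
        rw [hC.inv_right.eq, ← hC.inv_left.eq]
    _ = (cw N (k-2))⁻¹ * (sig N k * (sig N (k-1) * sig N (k-1)) * (sig N k)⁻¹) * cw N (k-2) := by
        group
    _ = (cw N (k-2))⁻¹ * ((sig N (k-1))⁻¹ * (sig N k * sig N k) * sig N (k-1)) * cw N (k-2) := by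
        rw [ht]
    _ = (sig N (k-1) * cw N (k-2))⁻¹ * (sig N k * sig N k) * (sig N (k-1) * cw N (k-2)) := by
        group

/-- (III): `σ_k x_{1,k+1} σ_k⁻¹ = x_{1,k+1}⁻¹ x_{1k} x_{1,k+1}`. -/
lemma conj_III (k : ℕ) (hk2 : 2 ≤ k) (hkN : k ≤ N + 1) :
    sig N k * xgen N 1 (k+1) * (sig N k)⁻¹ =
      (xgen N 1 (k+1))⁻¹ * xgen N 1 k * xgen N 1 (k+1) := by
  have hb : sig N (k-1) * sig N k * sig N (k-1) = sig N k * sig N (k-1) * sig N k := by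
    have := braid_rel (N:=N) (k-1) (by omega) (by omega)
    have hkk : k - 1 + 1 = k := by omega
    rwa [hkk] at this
  have ht := T2 hb
  have hC : Commute (sig N k) (cw N (k-2)) := sig_cw_comm (N:=N) k (k-2) (by omega) hkN
  have e1 : cw N (k+1-2) = sig N (k-1) * cw N (k-2) := by
    have h1 : k + 1 - 2 = k - 1 := by omega
    have h2 : k - 2 = (k-1) - 1 := by omega
    rw [h1, h2, cw_eq_sig_mul (k-1) (by omega)]
  have h3 : k + 1 - 1 = k := by omega
  rw [xgen_cw k hk2, xgen_cw (k+1) (by omega), e1, h3, sq, sq]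
  set c := cw N (k-2)
  set x := sig N (k-1)
  set y := sig N k
  calc y * ((x * c)⁻¹ * (y*y) * (x * c)) * y⁻¹
      = (y * c⁻¹) * (x⁻¹ * (y*y) * x) * (c * y⁻¹) := by group
    _ = (c⁻¹ * y) * (x⁻¹ * (y*y) * x) * (y⁻¹ * c) := by
        rw [hC.inv_right.eq, ← hC.inv_left.eq]
    _ = c⁻¹ * (y * (x⁻¹ * (y*y) * x) * y⁻¹) * c := by group
    _ = c⁻¹ * ((x⁻¹*(y*y)*x)⁻¹ * (x*x) * (x⁻¹*(y*y)*x)) * c := by rw [ht]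
    _ = ((x*c)⁻¹ * (y*y) * (x*c))⁻¹ * (c⁻¹ * (x*x) * c) * ((x*c)⁻¹ * (y*y) * (x*c)) := by group

/-- (II'): `σ_k⁻¹ x_{1,k+1} σ_k = x_{1k}`. -/
lemma conj_II' (k : ℕ) (hk2 : 2 ≤ k) (hkN : k ≤ N + 1) :
    (sig N k)⁻¹ * xgen N 1 (k+1) * sig N k = xgen N 1 k := by
  rw [← conj_II k hk2 hkN]; group

/-- (III'): `σ_k⁻¹ x_{1k} σ_k = x_{1k} x_{1,k+1} x_{1k}⁻¹`. -/
lemma conj_III' (k : ℕ) (hk2 : 2 ≤ k) (hkN : k ≤ N + 1) :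
    (sig N k)⁻¹ * xgen N 1 k * sig N k =
      xgen N 1 k * xgen N 1 (k+1) * (xgen N 1 k)⁻¹ := by
  have h3 := conj_III (N:=N) k hk2 hkN
  have h2 := conj_II' (N:=N) k hk2 hkN
  -- from h3 : σ A' σ⁻¹ = A'⁻¹ A A'  where A = xgen k, A' = xgen (k+1)
  -- so A = A' (σ A' σ⁻¹) A'⁻¹, hence σ⁻¹ A σ = (σ⁻¹ A' σ) A' (σ⁻¹ A'⁻¹ σ) = A A' A⁻¹.
  have e : xgen N 1 k = xgen N 1 (k+1) * (sig N k * xgen N 1 (k+1) * (sig N k)⁻¹) *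
      (xgen N 1 (k+1))⁻¹ := by rw [h3]; group
  calc (sig N k)⁻¹ * xgen N 1 k * sig N k
      = ((sig N k)⁻¹ * xgen N 1 (k+1) * sig N k) * xgen N 1 (k+1) *
        ((sig N k)⁻¹ * (xgen N 1 (k+1))⁻¹ * sig N k) := by rw [e]; group
    _ = xgen N 1 k * xgen N 1 (k+1) * ((sig N k)⁻¹ * (xgen N 1 (k+1))⁻¹ * sig N k) := by rw [h2]
    _ = xgen N 1 k * xgen N 1 (k+1) *
        (((sig N k)⁻¹ * xgen N 1 (k+1) * sig N k))⁻¹ := by group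
    _ = xgen N 1 k * xgen N 1 (k+1) * (xgen N 1 k)⁻¹ := by rw [h2]

/-! ### Subgroup transport -/

/-- The morphism from the free group sending the generators to `x_{12}, …`. -/
def LL (N : ℕ) : FreeGroup (Fin (N+1)) →* Braid N :=
  FreeGroup.lift fun i : Fin (N + 1) => xgen N 1 ((i : ℕ) + 2)

/-- Its range. -/
def RL (N : ℕ) : Subgroup (Braid N) := (LL N).range

lemma xgen_mem (j : ℕ) (h2 : 2 ≤ j) (hN : j ≤ N + 2) : xgen N 1 j ∈ RL N := by
  refine ⟨FreeGroup.of ⟨j-2, by omega⟩, ?_⟩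
  show FreeGroup.lift _ _ = _
  rw [FreeGroup.lift_apply_of]
  congr 1
  show j - 2 + 2 = j
  omega

/-- Conjugated subgroup `g H g⁻¹`. -/
def conjSub {G : Type*} [Group G] (g : G) (H : Subgroup G) : Subgroup G :=
  H.map (MulAut.conj g).toMonoidHom

lemma mem_conjSub {G : Type*} [Group G] {g x : G} {H : Subgroup G} :
    x ∈ conjSub g H ↔ g⁻¹ * x * g ∈ H := by
  constructor
  · rintro ⟨y, hy, rfl⟩
    have : g⁻¹ * ((MulAut.conj g).toMonoidHom y) * g = y := by
      simp [MulAut.conj_apply]; group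
    rwa [this]
  · intro h
    refine ⟨g⁻¹ * x * g, h, ?_⟩
    simp [MulAut.conj_apply]; group

lemma conjSub_conjSub {G : Type*} [Group G] (g h : G) (H : Subgroup G) :
    conjSub g (conjSub h H) = conjSub (g * h) H := by
  ext x
  rw [mem_conjSub, mem_conjSub, mem_conjSub]
  have : h⁻¹ * (g⁻¹ * x * g) * h = (g*h)⁻¹ * x * (g*h) := by group
  rw [this]

lemma conjSub_one {G : Type*} [Group G] (H : Subgroup G) : conjSub 1 H = H := by
  ext x; rw [mem_conjSub]; simp

lemma conjSub_self_mem {G : Type*} [Group G] {x : G} {H : Subgroup G} (hx : x ∈ H) :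
    conjSub x H = H := by
  ext y
  rw [mem_conjSub]
  constructor
  · intro h1
    have := H.mul_mem (H.mul_mem hx h1) (H.inv_mem hx)
    have e : x * (x⁻¹ * y * x) * x⁻¹ = y := by group
    rwa [e] at this
  · intro h1
    exact H.mul_mem (H.mul_mem (H.inv_mem hx) h1) hx

lemma conjSub_mono {G : Type*} [Group G] (g : G) {H K : Subgroup G} (h : H ≤ K) :
    conjSub g H ≤ conjSub g K := by
  intro x hx
  rw [mem_conjSub] at hx ⊢
  exact h hx

lemma conjSub_RL_le (g : Braid N)
    (h : ∀ i : Fin (N+1), g * xgen N 1 ((i:ℕ)+2) * g⁻¹ ∈ RL N) :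
    conjSub g (RL N) ≤ RL N := by
  rintro x ⟨y, ⟨w, rfl⟩, rfl⟩
  have hcomp : (MulAut.conj g).toMonoidHom.comp (LL N) =
      FreeGroup.lift (fun i : Fin (N+1) => g * xgen N 1 ((i:ℕ)+2) * g⁻¹) := by
    apply FreeGroup.ext_hom
    intro a
    simp [LL, MulAut.conj_apply]
  have : (MulAut.conj g).toMonoidHom (LL N w) =
      FreeGroup.lift (fun i : Fin (N+1) => g * xgen N 1 ((i:ℕ)+2) * g⁻¹) w := by
    rw [← hcomp]; rfl
  rw [this]
  have hle := FreeGroup.range_lift_le (s := RL N)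
    (f := fun i : Fin (N+1) => g * xgen N 1 ((i:ℕ)+2) * g⁻¹) (by rintro z ⟨i, rfl⟩; exact h i)
  exact hle ⟨w, rfl⟩

lemma sig_conj_RL (k : ℕ) (hk2 : 2 ≤ k) (hkN : k ≤ N + 1) :
    conjSub (sig N k) (RL N) = RL N := by
  apply le_antisymm
  · apply conjSub_RL_le
    intro i
    rcases eq_or_ne ((i:ℕ)+2) k with hik | hik
    · rw [hik, conj_II k hk2 hkN]
      exact xgen_mem (k+1) (by omega) (by omega)
    · rcases eq_or_ne ((i:ℕ)+2) (k+1) with hik2 | hik2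
      · rw [hik2, conj_III k hk2 hkN]
        exact Subgroup.mul_mem _ (Subgroup.mul_mem _
          (Subgroup.inv_mem _ (xgen_mem (k+1) (by omega) (by omega)))
          (xgen_mem k hk2 (by omega))) (xgen_mem (k+1) (by omega) (by omega))
      · rw [conj_I k ((i:ℕ)+2) hk2 hkN (by omega) (by omega) hik hik2]
        exact xgen_mem ((i:ℕ)+2) (by omega) (by omega)
  · have hinv : conjSub (sig N k)⁻¹ (RL N) ≤ RL N := by
      apply conjSub_RL_le
      intro i
      have hg : ∀ x : Braid N, (sig N k)⁻¹ * x * ((sig N k)⁻¹)⁻¹ = (sig N k)⁻¹ * x * sig N k := by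
        intro x; group
      rw [hg]
      rcases eq_or_ne ((i:ℕ)+2) k with hik | hik
      · rw [hik, conj_III' k hk2 hkN]
        exact Subgroup.mul_mem _ (Subgroup.mul_mem _ (xgen_mem k hk2 (by omega))
          (xgen_mem (k+1) (by omega) (by omega)))
          (Subgroup.inv_mem _ (xgen_mem k hk2 (by omega)))
      · rcases eq_or_ne ((i:ℕ)+2) (k+1) with hik2 | hik2
        · rw [hik2, conj_II' k hk2 hkN]
          exact xgen_mem k hk2 (by omega)
        · have hI := conj_I (N:=N) k ((i:ℕ)+2) hk2 hkN (by omega) (by omega) hik hik2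
          have hI2 : (sig N k)⁻¹ * (sig N k * xgen N 1 ((i:ℕ)+2) * (sig N k)⁻¹) * sig N k
              = xgen N 1 ((i:ℕ)+2) := by group
          rw [hI] at hI2
          rw [hI2]
          exact xgen_mem ((i:ℕ)+2) (by omega) (by omega)
    calc RL N = conjSub (sig N k) (conjSub (sig N k)⁻¹ (RL N)) := by
          rw [conjSub_conjSub, mul_inv_cancel, conjSub_one]
      _ ≤ conjSub (sig N k) (RL N) := conjSub_mono _ hinv

/-- The conjugate of `RL` associated to the strand in position `q` (0-based). -/
def Rq (N : ℕ) (q : Fin (N+2)) : Subgroup (Braid N) := conjSub (cw N (q:ℕ)) (RL N)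

lemma step_sig (l : Fin (N+1)) (q : Fin (N+2)) :
    conjSub (sig N ((l:ℕ)+1)) (Rq N q) = Rq N (Equiv.swap l.castSucc l.succ q) := by
  have hl : (l:ℕ) ≤ N := by omega
  have hq : (q:ℕ) ≤ N + 1 := by omega
  rcases Nat.lt_trichotomy (q:ℕ) (l:ℕ) with h | h | h
  · -- q < l : σ_{l+1} commutes with cw q
    have hswap : Equiv.swap l.castSucc l.succ q = q :=
      Equiv.swap_apply_of_ne_of_ne (by simp [Fin.ext_iff]; omega) (by simp [Fin.ext_iff]; omega)
    rw [hswap]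
    show conjSub (sig N ((l:ℕ)+1)) (conjSub (cw N (q:ℕ)) (RL N)) = conjSub (cw N (q:ℕ)) (RL N)
    rw [conjSub_conjSub, sig_cw_comm (N:=N) ((l:ℕ)+1) (q:ℕ) (by omega) (by omega),
      ← conjSub_conjSub, sig_conj_RL ((l:ℕ)+1) (by omega) (by omega)]
  · -- q = l
    have hq' : q = l.castSucc := by apply Fin.ext; simp [h]
    rw [hq', Equiv.swap_apply_left]
    show conjSub (sig N ((l:ℕ)+1)) (conjSub (cw N (l.castSucc:ℕ)) (RL N)) =
      conjSub (cw N (l.succ:ℕ)) (RL N)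
    simp only [Fin.coe_castSucc, Fin.val_succ]
    rw [conjSub_conjSub, ← cw_succ]
  · rcases Nat.eq_or_lt_of_le h with h1 | h1
    · -- q = l + 1
      have hq' : q = l.succ := by apply Fin.ext; simp [← h1]
      rw [hq', Equiv.swap_apply_right]
      show conjSub (sig N ((l:ℕ)+1)) (conjSub (cw N (l.succ:ℕ)) (RL N)) =
        conjSub (cw N (l.castSucc:ℕ)) (RL N)
      simp only [Fin.coe_castSucc, Fin.val_succ]
      rw [conjSub_conjSub]
      have key : sig N ((l:ℕ)+1) * cw N ((l:ℕ)+1) = cw N (l:ℕ) * xgen N 1 ((l:ℕ)+2) := by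
        have e2 : (l:ℕ) + 2 - 2 = (l:ℕ) := by omega
        have e1 : (l:ℕ) + 2 - 1 = (l:ℕ) + 1 := by omega
        rw [xgen_cw ((l:ℕ)+2) (by omega), e2, e1, cw_succ, sq]
        group
      rw [key, ← conjSub_conjSub,
        conjSub_self_mem (xgen_mem ((l:ℕ)+2) (by omega) (by omega))]
    · -- q > l + 1
      have hswap : Equiv.swap l.castSucc l.succ q = q :=
        Equiv.swap_apply_of_ne_of_ne (by simp [Fin.ext_iff]; omega) (by simp [Fin.ext_iff]; omega)
      rw [hswap]
      show conjSub (sig N ((l:ℕ)+1)) (conjSub (cw N (q:ℕ)) (RL N)) = conjSub (cw N (q:ℕ)) (RL N)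
      rw [conjSub_conjSub, sig_cw_pass ((l:ℕ)+1) (q:ℕ) (by omega) (by omega) (by omega),
        ← conjSub_conjSub, sig_conj_RL ((l:ℕ)+2) (by omega) (by omega)]

lemma transport (π : Braid N →* Equiv.Perm (Fin (N + 2)))
    (hπ : ∀ l : Fin (N + 1), π (PresentedGroup.of l) = Equiv.swap l.castSucc l.succ)
    (g : Braid N) : ∀ q : Fin (N+2), conjSub g (Rq N q) = Rq N (π g q) := by
  have hg : g ∈ Subgroup.closure (Set.range (PresentedGroup.of (rels := braidRels N))) := by
    rw [PresentedGroup.closure_range_of]; trivial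
  induction hg using Subgroup.closure_induction with
  | mem x hx =>
    rcases hx with ⟨l, rfl⟩
    intro q
    have hsig : sig N ((l:ℕ)+1) = PresentedGroup.of l := by
      rw [sig_eq_of ((l:ℕ)+1) (by omega) (by omega)]
      simp
    rw [hπ l, ← hsig]
    exact step_sig l q
  | one =>
    intro q
    simp [conjSub_one]
  | mul x y hx hy ihx ihy =>
    intro q
    rw [← conjSub_conjSub, ihy q, ihx (π y q), map_mul, Equiv.Perm.mul_apply]
  | inv x hx ihx =>
    intro q
    have e : π x ((π x)⁻¹ q) = q := by simp
    calc conjSub x⁻¹ (Rq N q) = conjSub x⁻¹ (Rq N (π x ((π x)⁻¹ q))) := by rw [e]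
      _ = conjSub x⁻¹ (conjSub x (Rq N ((π x)⁻¹ q))) := by rw [ihx]
      _ = Rq N ((π x)⁻¹ q) := by rw [conjSub_conjSub, inv_mul_cancel, conjSub_one]
      _ = Rq N (π x⁻¹ q) := by rw [map_inv]

lemma pi_sig_sq (π : Braid N →* Equiv.Perm (Fin (N + 2)))
    (hπ : ∀ l : Fin (N + 1), π (PresentedGroup.of l) = Equiv.swap l.castSucc l.succ)
    (l : ℕ) : (π (sig N l)) ^ 2 = 1 := by
  by_cases h : 1 ≤ l ∧ l ≤ N + 1
  · rw [sig, dif_pos h, hπ, sq, Equiv.swap_mul_self]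
  · rw [sig, dif_neg h]; simp

lemma pi_xgen (π : Braid N →* Equiv.Perm (Fin (N + 2)))
    (hπ : ∀ l : Fin (N + 1), π (PresentedGroup.of l) = Equiv.swap l.castSucc l.succ)
    (j : ℕ) : π (xgen N 1 j) = 1 := by
  have h1 : π (xgen N 1 j) = (π (chain N 1 j))⁻¹ * (π (sig N (j-1)))^2 * π (chain N 1 j) := by
    rw [xgen]
    simp [map_mul, map_inv, map_pow]
  rw [h1, pi_sig_sq π hπ]
  group

lemma RL_le_ker (π : Braid N →* Equiv.Perm (Fin (N + 2)))
    (hπ : ∀ l : Fin (N + 1), π (PresentedGroup.of l) = Equiv.swap l.castSucc l.succ) :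
    RL N ≤ π.ker := by
  apply FreeGroup.range_lift_le
  rintro x ⟨i, rfl⟩
  exact MonoidHom.mem_ker.mpr (pi_xgen π hπ ((i:ℕ)+2))

lemma RL_normal (π : Braid N →* Equiv.Perm (Fin (N + 2)))
    (hπ : ∀ l : Fin (N + 1), π (PresentedGroup.of l) = Equiv.swap l.castSucc l.succ)
    (g : Braid N) (hg : g ∈ π.ker) (h : Braid N) (hh : h ∈ RL N) :
    g * h * g⁻¹ ∈ RL N := by
  have h0 := transport π hπ g (0 : Fin (N+2))
  have hR0 : Rq N (0 : Fin (N+2)) = RL N := by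
    show conjSub (cw N ((0 : Fin (N+2)):ℕ)) (RL N) = RL N
    have : ((0 : Fin (N+2)):ℕ) = 0 := rfl
    rw [this, cw_zero, conjSub_one]
  rw [MonoidHom.mem_ker.mp hg] at h0
  simp only [Equiv.Perm.one_apply] at h0
  rw [hR0] at h0
  rw [← h0]
  rw [mem_conjSub]
  have : g⁻¹ * (g * h * g⁻¹) * g = h := by group
  rwa [this]

/-! ### Part (i): the Artin representation -/

abbrev FB (N : ℕ) := FreeGroup (Fin (N+2))
abbrev FQ (N : ℕ) := FreeGroup (Fin (N+1))

/-- The generator `x_t` (0-based), junk `1` out of range. -/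
def xg (N : ℕ) (t : ℕ) : FB N := if h : t < N + 2 then FreeGroup.of ⟨t, h⟩ else 1

lemma xg_mk (t : ℕ) (h : t < N+2) : xg N t = FreeGroup.of ⟨t, h⟩ := dif_pos h

lemma xg_coe (k : Fin (N+2)) : xg N (k:ℕ) = FreeGroup.of k := by
  rw [xg_mk (k:ℕ) k.isLt]

lemma lift_xg {G : Type*} [Group G] (f : Fin (N+2) → G) (t : ℕ) (h : t < N+2) :
    FreeGroup.lift f (xg N t) = f ⟨t, h⟩ := by
  rw [xg_mk t h, FreeGroup.lift_apply_of]

/-- Artin automorphism of the free group: forward map on generators. -/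
def thFun (N : ℕ) (i : ℕ) : Fin (N+2) → FB N := fun k =>
  if (k:ℕ) = i then xg N i * xg N (i+1) * (xg N i)⁻¹
  else if (k:ℕ) = i + 1 then xg N i
  else FreeGroup.of k

/-- Inverse map on generators. -/
def thInvFun (N : ℕ) (i : ℕ) : Fin (N+2) → FB N := fun k =>
  if (k:ℕ) = i then xg N (i+1)
  else if (k:ℕ) = i + 1 then (xg N (i+1))⁻¹ * xg N i * xg N (i+1)
  else FreeGroup.of k

lemma thFun_at (i t : ℕ) (h : t < N+2) :
    thFun N i ⟨t, h⟩ = if t = i then xg N i * xg N (i+1) * (xg N i)⁻¹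
      else if t = i + 1 then xg N i else xg N t := by
  rw [thFun]
  by_cases h1 : t = i
  · simp [h1]
  · by_cases h2 : t = i+1 <;> simp [h1, h2, xg_mk t h]

lemma thInvFun_at (i t : ℕ) (h : t < N+2) :
    thInvFun N i ⟨t, h⟩ = if t = i then xg N (i+1)
      else if t = i + 1 then (xg N (i+1))⁻¹ * xg N i * xg N (i+1) else xg N t := by
  rw [thInvFun]
  by_cases h1 : t = i
  · simp [h1]
  · by_cases h2 : t = i+1 <;> simp [h1, h2, xg_mk t h]

lemma thFun_at' (i : ℕ) (k : Fin (N+2)) :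
    thFun N i k = if (k:ℕ) = i then xg N i * xg N (i+1) * (xg N i)⁻¹
      else if (k:ℕ) = i + 1 then xg N i else xg N (k:ℕ) := by
  rw [thFun]
  split_ifs <;> first | rfl | exact (xg_coe k).symm

lemma thInvFun_at' (i : ℕ) (k : Fin (N+2)) :
    thInvFun N i k = if (k:ℕ) = i then xg N (i+1)
      else if (k:ℕ) = i + 1 then (xg N (i+1))⁻¹ * xg N i * xg N (i+1) else xg N (k:ℕ) := by
  rw [thInvFun]
  split_ifs <;> first | rfl | exact (xg_coe k).symm

lemma th_comp1 (i : ℕ) (hi : i ≤ N) :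
    (FreeGroup.lift (thInvFun N i)).comp (FreeGroup.lift (thFun N i)) =
      MonoidHom.id (FB N) := by
  apply FreeGroup.ext_hom
  intro k
  simp only [MonoidHom.comp_apply, MonoidHom.id_apply, FreeGroup.lift_apply_of]
  rw [← xg_coe k, thFun_at' i k]
  by_cases h1 : (k:ℕ) = i
  · rw [if_pos h1]
    simp only [map_mul, map_inv]
    rw [lift_xg _ i (by omega), lift_xg _ (i+1) (by omega),
      thInvFun_at i i (by omega), thInvFun_at i (i+1) (by omega)]
    rw [if_pos rfl, if_neg (by omega), if_pos rfl, h1]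
    group
  · by_cases h2 : (k:ℕ) = i + 1
    · rw [if_neg h1, if_pos h2]
      rw [lift_xg _ i (by omega), thInvFun_at i i (by omega), if_pos rfl, h2]
    · rw [if_neg h1, if_neg h2]
      rw [lift_xg _ (k:ℕ) k.isLt, thInvFun_at i (k:ℕ) k.isLt, if_neg h1, if_neg h2]

lemma th_comp2 (i : ℕ) (hi : i ≤ N) :
    (FreeGroup.lift (thFun N i)).comp (FreeGroup.lift (thInvFun N i)) =
      MonoidHom.id (FB N) := by
  apply FreeGroup.ext_hom
  intro k
  simp only [MonoidHom.comp_apply, MonoidHom.id_apply, FreeGroup.lift_apply_of]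
  rw [← xg_coe k, thInvFun_at' i k]
  by_cases h1 : (k:ℕ) = i
  · rw [if_pos h1]
    rw [lift_xg _ (i+1) (by omega), thFun_at i (i+1) (by omega),
      if_neg (by omega), if_pos rfl, h1]
  · by_cases h2 : (k:ℕ) = i + 1
    · rw [if_neg h1, if_pos h2]
      simp only [map_mul, map_inv]
      rw [lift_xg _ i (by omega), lift_xg _ (i+1) (by omega),
        thFun_at i i (by omega), thFun_at i (i+1) (by omega)]
      rw [if_pos rfl, if_neg (by omega), if_pos rfl, h2]
      group
    · rw [if_neg h1, if_neg h2]
      rw [lift_xg _ (k:ℕ) k.isLt, thFun_at i (k:ℕ) k.isLt, if_neg h1, if_neg h2]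

/-- The Artin automorphism `σ_i ↦ (x_i ↦ x_i x_{i+1} x_i⁻¹, x_{i+1} ↦ x_i)` (0-based). -/
def th (N : ℕ) (i : ℕ) : MulAut (FB N) :=
  if hi : i ≤ N then
    (FreeGroup.lift (thFun N i)).toMulEquiv (FreeGroup.lift (thInvFun N i))
      (th_comp1 i hi) (th_comp2 i hi)
  else 1

lemma th_apply (i : ℕ) (hi : i ≤ N) (v : FB N) :
    th N i v = FreeGroup.lift (thFun N i) v := by
  rw [th, dif_pos hi, MonoidHom.toMulEquiv_apply]

lemma th_xg_self (i : ℕ) (hi : i ≤ N) :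
    th N i (xg N i) = xg N i * xg N (i+1) * (xg N i)⁻¹ := by
  rw [th_apply i hi, lift_xg _ i (by omega), thFun_at i i (by omega), if_pos rfl]

lemma th_xg_next (i : ℕ) (hi : i ≤ N) : th N i (xg N (i+1)) = xg N i := by
  rw [th_apply i hi, lift_xg _ (i+1) (by omega), thFun_at i (i+1) (by omega),
    if_neg (by omega), if_pos rfl]

lemma th_xg_other (i t : ℕ) (hi : i ≤ N) (h1 : t ≠ i) (h2 : t ≠ i+1) :
    th N i (xg N t) = xg N t := by
  by_cases ht : t < N + 2
  · rw [th_apply i hi, lift_xg _ t ht, thFun_at i t ht, if_neg h1, if_neg h2]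
  · rw [xg, dif_neg ht, map_one]

lemma mulAut_ext_of {e1 e2 : MulAut (FB N)}
    (h : ∀ k : Fin (N+2), e1 (FreeGroup.of k) = e2 (FreeGroup.of k)) : e1 = e2 := by
  have : e1.toMonoidHom = e2.toMonoidHom := FreeGroup.ext_hom _ _ h
  exact MulEquiv.toMonoidHom_injective this

lemma braid_th (a : ℕ) (ha : a + 1 ≤ N) :
    th N a * th N (a+1) * th N a = th N (a+1) * th N a * th N (a+1) := by
  have hA : a ≤ N := by omega
  have hB : a + 1 ≤ N := ha
  have tAu : th N a (xg N a) = xg N a * xg N (a+1) * (xg N a)⁻¹ := th_xg_self a hA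
  have tAv : th N a (xg N (a+1)) = xg N a := th_xg_next a hA
  have tAw : th N a (xg N (a+2)) = xg N (a+2) :=
    th_xg_other a (a+2) hA (by omega) (by omega)
  have tBu : th N (a+1) (xg N a) = xg N a :=
    th_xg_other (a+1) a hB (by omega) (by omega)
  have tBv : th N (a+1) (xg N (a+1)) = xg N (a+1) * xg N (a+2) * (xg N (a+1))⁻¹ := by
    have := th_xg_self (a+1) hB
    simpa using this
  have tBw : th N (a+1) (xg N (a+2)) = xg N (a+1) := by
    have := th_xg_next (a+1) hB
    simpa using this
  apply mulAut_ext_of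
  intro k
  show th N a (th N (a+1) (th N a (FreeGroup.of k))) =
    th N (a+1) (th N a (th N (a+1) (FreeGroup.of k)))
  rw [← xg_coe k]
  by_cases h1 : (k:ℕ) = a
  · rw [h1]
    simp only [map_mul, map_inv, tAu, tAv, tAw, tBu, tBv, tBw]
    group
  · by_cases h2 : (k:ℕ) = a + 1
    · rw [h2]
      simp only [map_mul, map_inv, tAu, tAv, tAw, tBu, tBv, tBw]
      done
    · by_cases h3 : (k:ℕ) = a + 2
      · rw [h3]
        simp only [map_mul, map_inv, tAu, tAv, tAw, tBu, tBv, tBw]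
      · have oA : th N a (xg N (k:ℕ)) = xg N (k:ℕ) :=
          th_xg_other a _ hA h1 (by omega)
        have oB : th N (a+1) (xg N (k:ℕ)) = xg N (k:ℕ) :=
          th_xg_other (a+1) _ hB (by omega) (by omega)
        simp only [oA, oB]

lemma far_th (a b : ℕ) (hab : a + 1 < b) (hb : b ≤ N) :
    th N a * th N b = th N b * th N a := by
  have hA : a ≤ N := by omega
  have tAu : th N a (xg N a) = xg N a * xg N (a+1) * (xg N a)⁻¹ := th_xg_self a hA
  have tAv : th N a (xg N (a+1)) = xg N a := th_xg_next a hA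
  have tBx : th N b (xg N b) = xg N b * xg N (b+1) * (xg N b)⁻¹ := th_xg_self b hb
  have tBy : th N b (xg N (b+1)) = xg N b := th_xg_next b hb
  have tBu : th N b (xg N a) = xg N a := th_xg_other b a hb (by omega) (by omega)
  have tBv : th N b (xg N (a+1)) = xg N (a+1) := th_xg_other b (a+1) hb (by omega) (by omega)
  have tAx : th N a (xg N b) = xg N b := th_xg_other a b hA (by omega) (by omega)
  have tAy : th N a (xg N (b+1)) = xg N (b+1) := th_xg_other a (b+1) hA (by omega) (by omega)
  apply mulAut_ext_of
  intro k
  show th N a (th N b (FreeGroup.of k)) = th N b (th N a (FreeGroup.of k))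
  rw [← xg_coe k]
  by_cases h1 : (k:ℕ) = a
  · rw [h1]; simp only [map_mul, map_inv, tAu, tAv, tBu, tBv]
  · by_cases h2 : (k:ℕ) = a + 1
    · rw [h2]; simp only [map_mul, map_inv, tAu, tAv, tBu, tBv]
    · by_cases h3 : (k:ℕ) = b
      · rw [h3]; simp only [map_mul, map_inv, tBx, tBy, tAx, tAy]
      · by_cases h4 : (k:ℕ) = b + 1
        · rw [h4]; simp only [map_mul, map_inv, tBx, tBy, tAx, tAy]
        · have oA : th N a (xg N (k:ℕ)) = xg N (k:ℕ) := th_xg_other a _ hA h1 h2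
          have oB : th N b (xg N (k:ℕ)) = xg N (k:ℕ) := th_xg_other b _ hb h3 h4
          simp only [oA, oB]

def rfun (N : ℕ) : Fin (N+1) → MulAut (FB N) := fun l => th N (l:ℕ)

lemma relcheck : ∀ r ∈ braidRels N, FreeGroup.lift (rfun N) r = 1 := by
  rintro r (⟨i,j,hij,rfl⟩|⟨i,j,hij,rfl⟩)
  · simp only [map_mul, map_inv, FreeGroup.lift_apply_of]
    rw [mul_inv_eq_one]
    show th N (i:ℕ) * th N (j:ℕ) * th N (i:ℕ) = th N (j:ℕ) * th N (i:ℕ) * th N (j:ℕ)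
    rw [← hij]
    exact braid_th (i:ℕ) (by omega)
  · simp only [map_mul, map_inv, FreeGroup.lift_apply_of]
    rw [mul_inv_eq_one]
    show th N (i:ℕ) * th N (j:ℕ) = th N (j:ℕ) * th N (i:ℕ)
    exact far_th (i:ℕ) (j:ℕ) hij (by omega)

/-- The Artin representation of the braid group. -/
def rho (N : ℕ) : Braid N →* MulAut (FB N) := PresentedGroup.toGroup relcheck

lemma rho_of (l : Fin (N+1)) : rho N (PresentedGroup.of l) = th N (l:ℕ) :=
  PresentedGroup.toGroup.of relcheck

lemma rho_sig (l : ℕ) (h1 : 1 ≤ l) (h2 : l ≤ N+1) : rho N (sig N l) = th N (l-1) := by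
  rw [sig_eq_of l h1 h2, rho_of]

/-! ### Action of the chain and of the pure braid generators -/

def Dk (N : ℕ) (k : ℕ) : MulAut (FB N) := rho N (cw N k)

def Pw (N : ℕ) (k : ℕ) : FB N := ((List.range k).map fun t => xg N t).prod
def pw (N : ℕ) (k : ℕ) : FB N := ((List.range k).map fun t => xg N (t+1)).prod

lemma Pw_zero : Pw N 0 = 1 := rfl
lemma pw_zero : pw N 0 = 1 := rfl

lemma Pw_succ (k : ℕ) : Pw N (k+1) = Pw N k * xg N k := by
  rw [Pw, List.range_succ]; simp [Pw]

lemma pw_succ (k : ℕ) : pw N (k+1) = pw N k * xg N (k+1) := by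
  rw [pw, List.range_succ]; simp [pw]

lemma th_Pw (i k : ℕ) (hi : i ≤ N) (hk : k ≤ i) : th N i (Pw N k) = Pw N k := by
  induction k with
  | zero => rw [Pw_zero, map_one]
  | succ k ih =>
    rw [Pw_succ, map_mul, ih (by omega), th_xg_other i k hi (by omega) (by omega)]

lemma Dk_zero : Dk N 0 = 1 := by rw [Dk, cw_zero, map_one]

lemma Dk_succ (k : ℕ) (h : k ≤ N) : Dk N (k+1) = th N k * Dk N k := by
  rw [Dk, cw_succ, map_mul, rho_sig (k+1) (by omega) (by omega), Dk]
  norm_num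

lemma Dk_high (k t : ℕ) (hk : k ≤ N+1) (h : k < t) : Dk N k (xg N t) = xg N t := by
  induction k with
  | zero => rw [Dk_zero]; rfl
  | succ k ih =>
    rw [Dk_succ k (by omega)]
    show th N k (Dk N k (xg N t)) = xg N t
    rw [ih (by omega) (by omega), th_xg_other k t (by omega) (by omega) (by omega)]

lemma Dk_x0 (k : ℕ) (hk : k ≤ N+1) :
    Dk N k (xg N 0) = Pw N k * xg N k * (Pw N k)⁻¹ := by
  induction k with
  | zero => rw [Dk_zero, Pw_zero]; show xg N 0 = _; group
  | succ k ih =>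
    rw [Dk_succ k (by omega)]
    show th N k (Dk N k (xg N 0)) = _
    rw [ih (by omega)]
    have h1 := th_Pw (N:=N) k k (by omega) le_rfl
    have h2 := th_xg_self (N:=N) k (by omega)
    simp only [map_mul, map_inv, h1, h2]
    rw [Pw_succ]
    group

lemma Dk_mid (k t : ℕ) (hk : k ≤ N+1) (h1 : 1 ≤ t) (h2 : t ≤ k) :
    Dk N k (xg N t) = xg N (t-1) := by
  induction k with
  | zero => omega
  | succ k ih =>
    rw [Dk_succ k (by omega)]
    show th N k (Dk N k (xg N t)) = _
    rcases Nat.lt_or_ge t (k+1) with h3 | h3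
    · rw [ih (by omega) (by omega), th_xg_other k (t-1) (by omega) (by omega) (by omega)]
    · have ht : t = k + 1 := by omega
      rw [ht, Dk_high k (k+1) (by omega) (by omega)]
      have := th_xg_next k (N:=N) (by omega)
      rw [this]
      norm_num

lemma Dk_pw (k m : ℕ) (hk : k ≤ N+1) (hm : m ≤ k) : Dk N k (pw N m) = Pw N m := by
  induction m with
  | zero => rw [pw_zero, Pw_zero, map_one]
  | succ m ih =>
    rw [pw_succ, Pw_succ, map_mul, ih (by omega), Dk_mid k (m+1) hk (by omega) (by omega)]
    norm_num

/-- Conjugating words for the action of `x_{1,m+2}`. -/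
def zz (N : ℕ) (m : ℕ) : FB N := xg N 0 * pw N m * xg N (m+1) * (pw N m)⁻¹
def uu (N : ℕ) (m : ℕ) : FB N := (pw N m)⁻¹ * xg N 0 * pw N m

lemma rho_xgen_eval (m : ℕ) (hm : m ≤ N) (v : FB N) :
    rho N (xgen N 1 (m+2)) v = (Dk N m)⁻¹ (th N m (th N m (Dk N m v))) := by
  have e2 : m + 2 - 2 = m := by omega
  have e1 : m + 2 - 1 = m + 1 := by omega
  rw [xgen_cw (m+2) (by omega), e2, e1]
  rw [map_mul, map_mul, map_inv, map_pow, rho_sig (m+1) (by omega) (by omega)]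
  have e3 : m + 1 - 1 = m := by omega
  rw [e3, sq]
  rfl

lemma psi_cancel (m : ℕ) {x y : FB N}
    (h : th N m (th N m (Dk N m x)) = Dk N m y) (hm : m ≤ N) :
    rho N (xgen N 1 (m+2)) x = y := by
  rw [rho_xgen_eval m hm, h]
  change ((Dk N m)⁻¹ * Dk N m) y = y
  rw [inv_mul_cancel]
  rfl

lemma psi_x0 (m : ℕ) (hm : m ≤ N) :
    rho N (xgen N 1 (m+2)) (xg N 0) = zz N m * xg N 0 * (zz N m)⁻¹ := by
  apply psi_cancel m _ hm
  rw [Dk_x0 m (by omega)]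
  have hPw := th_Pw (N:=N) m m (by omega) le_rfl
  have hs := th_xg_self (N:=N) m hm
  have hn := th_xg_next (N:=N) m hm
  have hDx0 := Dk_x0 (N:=N) m (by omega)
  have hDpw := Dk_pw (N:=N) m m (by omega) le_rfl
  have hDh := Dk_high (N:=N) m (m+1) (by omega) (by omega)
  simp only [map_mul, map_inv, hPw, hs, hn]
  simp only [zz, map_mul, map_inv, hDx0, hDpw, hDh]
  group

lemma psi_xtop (m : ℕ) (hm : m ≤ N) :
    rho N (xgen N 1 (m+2)) (xg N (m+1)) = uu N m * xg N (m+1) * (uu N m)⁻¹ := by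
  apply psi_cancel m _ hm
  have hPw := th_Pw (N:=N) m m (by omega) le_rfl
  have hs := th_xg_self (N:=N) m hm
  have hn := th_xg_next (N:=N) m hm
  have hDx0 := Dk_x0 (N:=N) m (by omega)
  have hDpw := Dk_pw (N:=N) m m (by omega) le_rfl
  have hDh := Dk_high (N:=N) m (m+1) (by omega) (by omega)
  rw [hDh]
  simp only [map_mul, map_inv, hs, hn]
  simp only [uu, map_mul, map_inv, hDx0, hDpw, hDh]
  group

lemma psi_other (m t : ℕ) (hm : m ≤ N) (h0 : t ≠ 0) (hne : t ≠ m+1) :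
    rho N (xgen N 1 (m+2)) (xg N t) = xg N t := by
  apply psi_cancel m _ hm
  rcases Nat.lt_or_ge t (m+1) with h3 | h3
  · rw [Dk_mid m t (by omega) (by omega) (by omega),
      th_xg_other m (t-1) hm (by omega) (by omega),
      th_xg_other m (t-1) hm (by omega) (by omega)]
  · have ht : m + 2 ≤ t := by omega
    rw [Dk_high m t (by omega) (by omega),
      th_xg_other m t hm (by omega) (by omega),
      th_xg_other m t hm (by omega) (by omega)]

/-! ### The quotient detector `qh` -/

def qg (N : ℕ) (t : ℕ) : FQ N := if h : t < N+1 then FreeGroup.of ⟨t, h⟩ else 1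

def qf (N : ℕ) : Fin (N+2) → FQ N := fun k => if (k:ℕ) = 0 then 1 else qg N ((k:ℕ)-1)

def qh (N : ℕ) : FB N →* FQ N := FreeGroup.lift (qf N)

lemma qh_xg0 : qh N (xg N 0) = 1 := by
  rw [qh, lift_xg _ 0 (by omega)]
  simp [qf]

lemma qh_xg (t : ℕ) (h1 : 1 ≤ t) (h2 : t < N+2) : qh N (xg N t) = qg N (t-1) := by
  rw [qh, lift_xg _ t h2]
  show (if ((⟨t, h2⟩ : Fin (N+2)):ℕ) = 0 then 1 else qg N (((⟨t, h2⟩ : Fin (N+2)):ℕ)-1))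
    = qg N (t-1)
  rw [if_neg (by simp; omega)]

lemma qh_of (x : Fin (N+2)) : qh N (FreeGroup.of x) = qf N x := FreeGroup.lift_apply_of

lemma qh_psi (m : ℕ) (hm : m ≤ N) (v : FB N) :
    qh N (rho N (xgen N 1 (m+2)) v) = qh N v := by
  have key : (qh N).comp (rho N (xgen N 1 (m+2))).toMonoidHom = qh N := by
    apply FreeGroup.ext_hom
    intro a
    show qh N (rho N (xgen N 1 (m+2)) (FreeGroup.of a)) = qh N (FreeGroup.of a)
    rw [← xg_coe a]
    by_cases h0 : (a:ℕ) = 0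
    · rw [h0, psi_x0 m hm]
      simp only [map_mul, map_inv, qh_xg0]
      group
    · by_cases h1 : (a:ℕ) = m+1
      · rw [h1, psi_xtop m hm]
        simp only [uu, map_mul, map_inv, qh_xg0]
        group
      · rw [psi_other m (a:ℕ) hm h0 h1]
  exact DFunLike.congr_fun key v

/-! ### The wreath-type detector -/

def e0 (N : ℕ) : Equiv.Perm (FQ N × ℤ) where
  toFun := fun p => (p.1, p.2 + if p.1 = 1 then 1 else 0)
  invFun := fun p => (p.1, p.2 - if p.1 = 1 then 1 else 0)
  left_inv := by intro p; simp
  right_inv := by intro p; simp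

def trQ {N : ℕ} (h : FQ N) : Equiv.Perm (FQ N × ℤ) :=
  (Equiv.mulLeft h).prodCongr (Equiv.refl ℤ)

def kf (N : ℕ) : Fin (N+2) → Equiv.Perm (FQ N × ℤ) :=
  fun k => if (k:ℕ) = 0 then e0 N else trQ (qf N k)

def kap (N : ℕ) : FB N →* Equiv.Perm (FQ N × ℤ) := FreeGroup.lift (kf N)

lemma kap_spec (w : FB N) :
    ∀ a : FQ N, ∃ c : ℤ, ∀ n : ℤ, kap N w (a, n) = (qh N w * a, n + c) := by
  refine FreeGroup.induction_on
    (C := fun w => ∀ a : FQ N, ∃ c : ℤ, ∀ n : ℤ, kap N w (a, n) = (qh N w * a, n + c))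
    w ?_ ?_ ?_ ?_
  · intro a
    exact ⟨0, fun n => by simp⟩
  · intro x a
    have hp : (pure x : FB N) = FreeGroup.of x := rfl
    by_cases h0 : (x:ℕ) = 0
    · refine ⟨if a = 1 then 1 else 0, fun n => ?_⟩
      rw [kap, FreeGroup.lift_apply_of, kf, if_pos h0, qh_of, qf, if_pos h0]
      show (a, n + if a = 1 then 1 else 0) = (1 * a, n + if a = 1 then 1 else 0)
      rw [one_mul]
    · refine ⟨0, fun n => ?_⟩
      rw [kap, FreeGroup.lift_apply_of, kf, if_neg h0, qh_of]
      show (qf N x * a, n) = (qf N x * a, n + 0)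
      rw [add_zero]
  · intro x _ a
    have hp : (pure x : FB N) = FreeGroup.of x := rfl
    by_cases h0 : (x:ℕ) = 0
    · refine ⟨-(if a = 1 then 1 else 0), fun n => ?_⟩
      rw [map_inv, kap, FreeGroup.lift_apply_of, kf, if_pos h0, map_inv, qh_of, qf, if_pos h0]
      show (a, n - if a = 1 then 1 else 0) = (1⁻¹ * a, n + -(if a = 1 then 1 else 0))
      rw [inv_one, one_mul, sub_eq_add_neg]
    · refine ⟨0, fun n => ?_⟩
      rw [map_inv, kap, FreeGroup.lift_apply_of, kf, if_neg h0, map_inv, qh_of]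
      show ((Equiv.mulLeft (qf N x)).symm a, n) = ((qf N x)⁻¹ * a, n + 0)
      rw [add_zero, Equiv.mulLeft_symm]
      rfl
  · intro u v hu hv a
    obtain ⟨cv, hcv⟩ := hv a
    obtain ⟨cu, hcu⟩ := hu (qh N v * a)
    refine ⟨cv + cu, fun n => ?_⟩
    rw [map_mul, Equiv.Perm.mul_apply, hcv n, hcu (n + cv), map_mul, mul_assoc]
    congr 1
    omega

lemma kap_xg0 : kap N (xg N 0) = e0 N := by
  rw [xg_mk 0 (by omega), kap, FreeGroup.lift_apply_of]
  show kf N ⟨0, _⟩ = e0 N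
  rw [kf, if_pos rfl]

lemma comm_q1 (g : FB N) (h : g * xg N 0 = xg N 0 * g) : qh N g = 1 := by
  obtain ⟨c, hc⟩ := kap_spec g 1
  have h1 : kap N (g * xg N 0) (1, 0) = kap N (xg N 0 * g) (1, 0) := by rw [h]
  rw [map_mul, map_mul, Equiv.Perm.mul_apply, Equiv.Perm.mul_apply, kap_xg0] at h1
  have e1 : (e0 N) ((1 : FQ N), (0:ℤ)) = (1, 1) := by
    show ((1 : FQ N), (0:ℤ) + if (1 : FQ N) = 1 then 1 else 0) = (1, 1)
    rw [if_pos rfl]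
    norm_num
  rw [e1, hc 1, hc 0] at h1
  have e2 : (e0 N) (qh N g * 1, (0:ℤ) + c) =
      (qh N g * 1, 0 + c + if qh N g * 1 = 1 then 1 else 0) := rfl
  rw [e2] at h1
  by_cases hq : qh N g * 1 = 1
  · rwa [mul_one] at hq
  · rw [if_neg hq] at h1
    have h2 : (1:ℤ) + c = 0 + c + 0 := congrArg Prod.snd h1
    omega

/-! ### The opposite-free-group bookkeeping homomorphism -/

def Phi (N : ℕ) : FQ N →* (FQ N)ᵐᵒᵖ :=
  FreeGroup.lift fun i : Fin (N+1) => MulOpposite.op (qh N (zz N (i:ℕ)))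

lemma mulaut_apply_inv_self (e : MulAut (FB N)) (v : FB N) : e (e⁻¹ v) = v := by
  change (e * e⁻¹) v = v
  rw [mul_inv_cancel]
  rfl

lemma q_rhoL (w : FQ N) : ∀ v, qh N (rho N (LL N w) v) = qh N v := by
  refine FreeGroup.induction_on
    (C := fun w => ∀ v, qh N (rho N (LL N w) v) = qh N v) w ?_ ?_ ?_ ?_
  · intro v
    rw [map_one, map_one]
    rfl
  · intro x v
    have hp : LL N (FreeGroup.of x) = xgen N 1 ((x:ℕ)+2) := FreeGroup.lift_apply_of
    rw [hp]
    exact qh_psi (x:ℕ) (by omega) v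
  · intro x hx v
    rw [map_inv, map_inv]
    have := hx ((rho N (LL N (FreeGroup.of x)))⁻¹ v)
    rw [mulaut_apply_inv_self] at this
    exact this.symm
  · intro u v hu hv w
    rw [map_mul, map_mul]
    show qh N (rho N (LL N u) (rho N (LL N v) w)) = qh N w
    rw [hu, hv]

lemma q_rhoL_inv (w : FQ N) (v : FB N) : qh N ((rho N (LL N w))⁻¹ v) = qh N v := by
  have := q_rhoL w ((rho N (LL N w))⁻¹ v)
  rw [mulaut_apply_inv_self] at this
  exact this.symm

lemma main_ind (w : FQ N) :
    ∃ g : FB N, rho N (LL N w) (xg N 0) = g * xg N 0 * g⁻¹ ∧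
      qh N g = MulOpposite.unop (Phi N w) := by
  refine FreeGroup.induction_on
    (C := fun w => ∃ g : FB N, rho N (LL N w) (xg N 0) = g * xg N 0 * g⁻¹ ∧
      qh N g = MulOpposite.unop (Phi N w)) w ?_ ?_ ?_ ?_
  · refine ⟨1, ?_, ?_⟩
    · rw [map_one, map_one]
      show xg N 0 = 1 * xg N 0 * 1⁻¹
      group
    · rw [map_one, map_one]
      rfl
  · intro x
    refine ⟨zz N (x:ℕ), ?_, ?_⟩
    · have hp : LL N (FreeGroup.of x) = xgen N 1 ((x:ℕ)+2) := FreeGroup.lift_apply_of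
      rw [hp]
      exact psi_x0 (x:ℕ) (by omega)
    · have hp : Phi N (FreeGroup.of x) = MulOpposite.op (qh N (zz N (x:ℕ))) := FreeGroup.lift_apply_of
      rw [hp, MulOpposite.unop_op]
  · intro x _
    set e := rho N (LL N (FreeGroup.of x)) with he
    refine ⟨e⁻¹ ((zz N (x:ℕ))⁻¹), ?_, ?_⟩
    · have hp : LL N (FreeGroup.of x) = xgen N 1 ((x:ℕ)+2) := FreeGroup.lift_apply_of
      have hx0 : e (xg N 0) = zz N (x:ℕ) * xg N 0 * (zz N (x:ℕ))⁻¹ := by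
        rw [he, hp]
        exact psi_x0 (x:ℕ) (by omega)
      rw [map_inv, map_inv]
      show e⁻¹ (xg N 0) = _
      apply e.injective
      simp only [map_mul, map_inv, mulaut_apply_inv_self]
      rw [hx0]
      group
    · have hq : qh N (e⁻¹ ((zz N (x:ℕ))⁻¹)) = qh N ((zz N (x:ℕ))⁻¹) := by
        rw [he]
        exact q_rhoL_inv (FreeGroup.of x) _
      rw [hq, map_inv, map_inv]
      have hp : Phi N (FreeGroup.of x) = MulOpposite.op (qh N (zz N (x:ℕ))) := FreeGroup.lift_apply_of
      rw [hp]
      rfl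
  · intro u v hu hv
    obtain ⟨gu, hu1, hu2⟩ := hu
    obtain ⟨gv, hv1, hv2⟩ := hv
    refine ⟨rho N (LL N u) gv * gu, ?_, ?_⟩
    · rw [map_mul, map_mul]
      show rho N (LL N u) (rho N (LL N v) (xg N 0)) = _
      rw [hv1]
      simp only [map_mul, map_inv, hu1]
      group
    · rw [map_mul, q_rhoL u gv, hu2, hv2, map_mul, MulOpposite.unop_mul]

/-! ### The explicit left inverse -/

def ehf (N : ℕ) : ℕ → FQ N
  | 0 => 1
  | (t+1) => (qg N t)⁻¹ * ehf N t

def chif (N : ℕ) : Fin (N+1) → FQ N :=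
  fun t => (ehf N (t:ℕ))⁻¹ * (FreeGroup.of t)⁻¹ * ehf N (t:ℕ)

def chi (N : ℕ) : FQ N →* FQ N := FreeGroup.lift (chif N)

def iop (N : ℕ) : (FQ N)ᵐᵒᵖ →* FQ N where
  toFun := fun g => (MulOpposite.unop g)⁻¹
  map_one' := by simp
  map_mul' := by intro a b; simp [mul_inv_rev]

def Cqw (N : ℕ) (m : ℕ) : FQ N := ((List.range m).map fun t => qg N t).prod

lemma Cqw_zero : Cqw N 0 = 1 := rfl

lemma Cqw_succ (m : ℕ) : Cqw N (m+1) = Cqw N m * qg N m := by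
  rw [Cqw, List.range_succ]; simp [Cqw]

lemma qh_pw (m : ℕ) (hm : m ≤ N+1) : qh N (pw N m) = Cqw N m := by
  induction m with
  | zero => rw [pw_zero, Cqw_zero, map_one]
  | succ m ih =>
    rw [pw_succ, Cqw_succ, map_mul, ih (by omega), qh_xg (m+1) (by omega) (by omega)]
    norm_num

lemma qh_zz (m : ℕ) (hm : m ≤ N) : qh N (zz N m) = Cqw N m * qg N m * (Cqw N m)⁻¹ := by
  have hpw := qh_pw (N:=N) m (by omega)
  have hx := qh_xg (N:=N) (m+1) (by omega) (by omega)
  have e1 : m + 1 - 1 = m := by omega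
  rw [e1] at hx
  rw [zz]
  simp only [map_mul, map_inv, qh_xg0, hpw, hx]
  group

lemma chi_qg (t : ℕ) (ht : t ≤ N) :
    chi N (qg N t) = (ehf N t)⁻¹ * (FreeGroup.of (⟨t, by omega⟩ : Fin (N+1)))⁻¹ * ehf N t := by
  rw [qg, dif_pos (by omega : t < N+1), chi, FreeGroup.lift_apply_of]
  rfl

lemma chi_Cqw (m : ℕ) (hm : m ≤ N+1) : chi N (Cqw N m) = ehf N m := by
  induction m with
  | zero => rw [Cqw_zero, map_one]; rfl
  | succ m ih =>
    rw [Cqw_succ, map_mul, ih (by omega), chi_qg (N:=N) m (by omega)]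
    show _ = (qg N m)⁻¹ * ehf N m
    rw [qg, dif_pos (by omega : m < N+1)]
    group

lemma Xi_Phi_id : ((chi N).comp ((iop N).comp (Phi N))) = MonoidHom.id (FQ N) := by
  apply FreeGroup.ext_hom
  intro i
  show chi N ((iop N) (Phi N (FreeGroup.of i))) = FreeGroup.of i
  rw [Phi, FreeGroup.lift_apply_of]
  show chi N ((qh N (zz N (i:ℕ)))⁻¹) = FreeGroup.of i
  rw [map_inv, qh_zz (i:ℕ) (by omega)]
  have h1 := chi_Cqw (N:=N) (i:ℕ) (by omega)
  have h2 := chi_qg (N:=N) (i:ℕ) (by omega)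
  simp only [map_mul, map_inv, h1, h2, Fin.eta]
  group

theorem LL_inj : Function.Injective (LL N) := by
  rw [injective_iff_map_eq_one]
  intro w hw
  obtain ⟨g, h1, h2⟩ := main_ind w
  rw [hw, map_one] at h1
  have h1' : xg N 0 = g * xg N 0 * g⁻¹ := h1
  have hcomm : g * xg N 0 = xg N 0 * g := by
    nth_rewrite 2 [h1']
    group
  have hq := comm_q1 g hcomm
  rw [hq] at h2
  have hPhi : Phi N w = 1 := by
    apply MulOpposite.unop_injective
    rw [← h2]
    rfl
  calc w = ((chi N).comp ((iop N).comp (Phi N))) w := by rw [Xi_Phi_id]; rfl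
    _ = chi N ((iop N) (Phi N w)) := rfl
    _ = 1 := by rw [hPhi]; simp

end BraidProof

/-- Section 1.4, claims (a) and (b): in the braid group `B_{n+1}` (here
`n = N + 1 ≥ 1`, so `B_{n+1} = Braid N` has `N + 2` strands), the morphism from
the free group on `n` generators sending the `i`-th generator to `x_{1,i+2}`
(i.e. to `x_{12}, …, x_{1,n+1}`) is injective, and its range is a normal
subgroup of the pure braid group `PB_{n+1} = ker (B_{n+1} → S_{n+1})`. -/
theorem free_subgroup_of_pure_braid (N : ℕ) :
    Function.Injective
      (FreeGroup.lift fun i : Fin (N + 1) => xgen N 1 ((i : ℕ) + 2)) ∧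
    ∀ π : Braid N →* Equiv.Perm (Fin (N + 2)),
      (∀ l : Fin (N + 1),
        π (PresentedGroup.of l) = Equiv.swap l.castSucc l.succ) →
      (FreeGroup.lift fun i : Fin (N + 1) => xgen N 1 ((i : ℕ) + 2)).range ≤
          π.ker ∧
        ∀ g ∈ π.ker,
          ∀ h ∈ (FreeGroup.lift fun i : Fin (N + 1) => xgen N 1 ((i : ℕ) + 2)).range,
            g * h * g⁻¹ ∈
              (FreeGroup.lift fun i : Fin (N + 1) => xgen N 1 ((i : ℕ) + 2)).range := by
  refine ⟨BraidProof.LL_inj, ?_⟩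
  intro π hπ
  refine ⟨BraidProof.RL_le_ker π hπ, ?_⟩
  intro g hg h hh
  exact BraidProof.RL_normal π hπ g hg h hh
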